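/- Let ξ and η be positive irrational real numbers and m a positive natural number with ξ·η = m. Suppose both (n−1, k−1) and (n, k) are connected, where n ≥ 2 and k ≥ 2, and set r = p_{n−1}/Q_{k−1}, s = P_{k−1}/q_{n−1}, r₁ = p_{n−2}/Q_{k−2}, s₁ = P_{k−2}/q_{n−2} (all of which are natural numbers). Then the roles of r and s are interchanged: r₁ = s and s₁ = r. -/

import Mathlib

/-- Complete quotients: `cq ξ 0 = ξ`, `cq ξ (n+1) = 1/(cq ξ n - ⌊cq ξ n⌋)`. -/
noncomputable def cq (ξ : ℝ) : ℕ → ℝ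
  | 0 => ξ
  | n + 1 => 1 / (cq ξ n - ⌊cq ξ n⌋)

/-- Partial quotients: `pquot ξ n = b_n = ⌊ξ_n⌋`. -/
noncomputable def pquot (ξ : ℝ) (n : ℕ) : ℤ := ⌊cq ξ n⌋

/-- Convergent numerators, shifted by one: `cnum ξ 0 = p_{-1} = 1`,
`cnum ξ 1 = p_0 = b_0`, and `cnum ξ (n+1) = p_n = b_n p_{n-1} + p_{n-2}`. -/
noncomputable def cnum (ξ : ℝ) : ℕ → ℤ
  | 0 => 1
  | 1 => pquot ξ 0
  | n + 2 => pquot ξ (n + 1) * cnum ξ (n + 1) + cnum ξ n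

/-- Convergent denominators, shifted by one: `cden ξ 0 = q_{-1} = 0`,
`cden ξ 1 = q_0 = 1`, and `cden ξ (n+1) = q_n = b_n q_{n-1} + q_{n-2}`. -/
noncomputable def cden (ξ : ℝ) : ℕ → ℤ
  | 0 => 0
  | 1 => 1
  | n + 2 => pquot ξ (n + 1) * cden ξ (n + 1) + cden ξ n

lemma irrational_cq (ξ : ℝ) (h : Irrational ξ) : ∀ n, Irrational (cq ξ n)
  | 0 => h
  | n + 1 => by
    have ih := irrational_cq ξ h n
    have h1 : Irrational (cq ξ n - ⌊cq ξ n⌋) := ih.sub_intCast _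
    rw [show cq ξ (n+1) = 1 / (cq ξ n - ⌊cq ξ n⌋) from rfl, one_div]
    exact h1.inv

lemma pquot_pos (ξ : ℝ) (h : Irrational ξ) (n : ℕ) : 1 ≤ pquot ξ (n + 1) := by
  have ih := irrational_cq ξ h n
  have hne : cq ξ n ≠ ⌊cq ξ n⌋ := ih.ne_int _
  have hf0 : (0 : ℝ) < cq ξ n - ⌊cq ξ n⌋ := by
    have := Int.fract_pos.mpr hne
    rwa [Int.fract] at this
  have hf1 : cq ξ n - ⌊cq ξ n⌋ < 1 := by
    have := Int.fract_lt_one (cq ξ n)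
    rwa [Int.fract] at this
  have h1 : (1 : ℝ) ≤ cq ξ (n + 1) := by
    rw [show cq ξ (n+1) = 1 / (cq ξ n - ⌊cq ξ n⌋) from rfl, le_div_iff₀ hf0]
    linarith
  have := Int.le_floor.mpr (by exact_mod_cast h1 : ((1:ℤ) : ℝ) ≤ cq ξ (n+1))
  exact this

lemma cden_nonneg (ξ : ℝ) (h : Irrational ξ) : ∀ n, 0 ≤ cden ξ n
  | 0 => le_refl 0
  | 1 => zero_le_one
  | n + 2 => by
    have h1 := cden_nonneg ξ h (n + 1)
    have h0 := cden_nonneg ξ h n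
    have hb := pquot_pos ξ h n
    show 0 ≤ pquot ξ (n + 1) * cden ξ (n + 1) + cden ξ n
    nlinarith

lemma cden_pos (ξ : ℝ) (h : Irrational ξ) : ∀ n, 1 ≤ cden ξ (n + 1)
  | 0 => le_refl 1
  | n + 1 => by
    have h1 := cden_pos ξ h n
    have h0 := cden_nonneg ξ h n
    have hb := pquot_pos ξ h n
    show 1 ≤ pquot ξ (n + 1) * cden ξ (n + 1) + cden ξ n
    nlinarith

lemma cnum_nonneg (ξ : ℝ) (hpos : 0 < ξ) (h : Irrational ξ) : ∀ n, 0 ≤ cnum ξ n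
  | 0 => zero_le_one
  | 1 => by
    show (0:ℤ) ≤ pquot ξ 0
    exact Int.floor_nonneg.mpr hpos.le
  | n + 2 => by
    have h1 := cnum_nonneg ξ hpos h (n + 1)
    have h0 := cnum_nonneg ξ hpos h n
    have hb := pquot_pos ξ h n
    show 0 ≤ pquot ξ (n + 1) * cnum ξ (n + 1) + cnum ξ n
    nlinarith

lemma cf_det (ξ : ℝ) : ∀ n, cnum ξ (n + 1) * cden ξ n - cnum ξ n * cden ξ (n + 1)
    = (-1) ^ (n + 1)
  | 0 => by simp [cnum, cden]
  | n + 1 => by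
    have h := cf_det ξ n
    show (pquot ξ (n + 1) * cnum ξ (n + 1) + cnum ξ n) * cden ξ (n + 1)
        - cnum ξ (n + 1) * (pquot ξ (n + 1) * cden ξ (n + 1) + cden ξ n)
        = (-1) ^ (n + 2)
    linear_combination -h

lemma coprime_cnum_cden (ξ : ℝ) (n : ℕ) : IsCoprime (cnum ξ (n + 1)) (cden ξ (n + 1)) := by
  have h := cf_det ξ n
  rcases neg_one_pow_eq_or ℤ (n + 1) with hp | hp <;> rw [hp] at h
  · exact ⟨cden ξ n, -cnum ξ n, by linarith⟩
  · exact ⟨-cden ξ n, cnum ξ n, by linarith⟩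

/-- Lemma 2.8: for two consecutive connections the roles of `r` and `s`
are interchanged: `r₁ = s` and `s₁ = r`. -/
theorem consecutive_connections_interchange
    (ξ η : ℝ) (m : ℕ) (hξpos : 0 < ξ) (hηpos : 0 < η)
    (hξirr : Irrational ξ) (hηirr : Irrational η) (hm : 0 < m)
    (hmul : ξ * η = m) (n k : ℕ) (hn : 2 ≤ n) (hk : 2 ≤ k)
    (hconn : cnum ξ n * cnum η k = (m : ℤ) * cden ξ n * cden η k)
    (hconn' : cnum ξ (n - 1) * cnum η (k - 1) =
      (m : ℤ) * cden ξ (n - 1) * cden η (k - 1)) :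
    cnum ξ (n - 1) / cden η (k - 1) = cnum η k / cden ξ n ∧
    cnum η (k - 1) / cden ξ (n - 1) = cnum ξ n / cden η k := by
  obtain ⟨a, rfl⟩ : ∃ a, n = a + 2 := ⟨n - 2, by omega⟩
  obtain ⟨b, rfl⟩ : ∃ b, k = b + 2 := ⟨k - 2, by omega⟩
  simp only [show a + 2 - 1 = a + 1 from rfl, show b + 2 - 1 = b + 1 from rfl] at *
  -- positivity of denominators
  have hq : (1:ℤ) ≤ cden ξ (a + 2) := cden_pos ξ hξirr (a + 1)
  have hq' : (1:ℤ) ≤ cden ξ (a + 1) := cden_pos ξ hξirr a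
  have hQ : (1:ℤ) ≤ cden η (b + 2) := cden_pos η hηirr (b + 1)
  have hQ' : (1:ℤ) ≤ cden η (b + 1) := cden_pos η hηirr b
  have hmz : (0:ℤ) < (m:ℤ) := by exact_mod_cast hm
  -- positivity of numerators
  have hpnn := cnum_nonneg ξ hξpos hξirr (a + 2)
  have hp'nn := cnum_nonneg ξ hξpos hξirr (a + 1)
  have hPnn := cnum_nonneg η hηpos hηirr (b + 2)
  have hP'nn := cnum_nonneg η hηpos hηirr (b + 1)
  have hpP : 0 < cnum ξ (a + 2) * cnum η (b + 2) := by rw [hconn]; positivity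
  have hp'P' : 0 < cnum ξ (a + 1) * cnum η (b + 1) := by rw [hconn']; positivity
  have hPpos : 0 < cnum η (b + 2) := by nlinarith
  have hppos : 0 < cnum ξ (a + 2) := by nlinarith
  have hP'pos : 0 < cnum η (b + 1) := by nlinarith
  have hp'pos : 0 < cnum ξ (a + 1) := by nlinarith
  -- divisibilities
  have hdQp : cden η (b + 2) ∣ cnum ξ (a + 2) :=
    ((coprime_cnum_cden η (b + 1)).symm).dvd_of_dvd_mul_right
      ⟨(m:ℤ) * cden ξ (a + 2), by linarith [hconn]⟩
  have hdqP : cden ξ (a + 2) ∣ cnum η (b + 2) :=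
    ((coprime_cnum_cden ξ (a + 1)).symm).dvd_of_dvd_mul_right
      ⟨(m:ℤ) * cden η (b + 2), by linarith [hconn]⟩
  have hdQ'p' : cden η (b + 1) ∣ cnum ξ (a + 1) :=
    ((coprime_cnum_cden η b).symm).dvd_of_dvd_mul_right
      ⟨(m:ℤ) * cden ξ (a + 1), by linarith [hconn']⟩
  have hdq'P' : cden ξ (a + 1) ∣ cnum η (b + 1) :=
    ((coprime_cnum_cden ξ a).symm).dvd_of_dvd_mul_right
      ⟨(m:ℤ) * cden η (b + 1), by linarith [hconn']⟩
  obtain ⟨r, hr⟩ := hdQp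
  obtain ⟨s, hs⟩ := hdqP
  obtain ⟨r₁, hr₁⟩ := hdQ'p'
  obtain ⟨s₁, hs₁⟩ := hdq'P'
  -- products
  have hrs : r * s = (m:ℤ) := by
    have hne : cden ξ (a + 2) * cden η (b + 2) ≠ 0 := by positivity
    apply mul_left_cancel₀ hne
    rw [hr, hs] at hconn
    linear_combination hconn
  have hr1s1 : r₁ * s₁ = (m:ℤ) := by
    have hne : cden ξ (a + 1) * cden η (b + 1) ≠ 0 := by positivity
    apply mul_left_cancel₀ hne
    rw [hr₁, hs₁] at hconn'
    linear_combination hconn'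
  have hspos : 0 < s := by
    rw [hs] at hPpos; nlinarith
  have hr1pos : 0 < r₁ := by
    rw [hr₁] at hp'pos; nlinarith
  -- determinant identities
  have e1 := cf_det ξ (a + 1)
  have e2 := cf_det η (b + 1)
  simp only [show a + 1 + 1 = a + 2 by omega] at e1
  simp only [show b + 1 + 1 = b + 2 by omega] at e2
  rw [hr, hr₁] at e1
  rw [hs, hs₁] at e2
  have hr1s : r₁ = s := by
    rcases neg_one_pow_eq_or ℤ (a + 2) with h1 | h1 <;>
      rcases neg_one_pow_eq_or ℤ (b + 2) with h2 | h2 <;>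
      rw [h1] at e1 <;> rw [h2] at e2
    · exfalso
      have : s + r₁ = 0 := by
        linear_combination -s * e1 - r₁ * e2 + cden ξ (a + 1) * cden η (b + 2) * hrs
          - cden ξ (a + 1) * cden η (b + 2) * hr1s1
      linarith
    · linear_combination s * e1 + r₁ * e2 - cden ξ (a + 1) * cden η (b + 2) * hrs
        + cden ξ (a + 1) * cden η (b + 2) * hr1s1
    · linear_combination -s * e1 - r₁ * e2 + cden ξ (a + 1) * cden η (b + 2) * hrs
        - cden ξ (a + 1) * cden η (b + 2) * hr1s1
    · exfalso
      have : s + r₁ = 0 := by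
        linear_combination s * e1 + r₁ * e2 - cden ξ (a + 1) * cden η (b + 2) * hrs
          + cden ξ (a + 1) * cden η (b + 2) * hr1s1
      linarith
  have hs1r : s₁ = r := by
    have hsne : s ≠ 0 := ne_of_gt hspos
    apply mul_left_cancel₀ hsne
    calc s * s₁ = r₁ * s₁ := by rw [hr1s]
    _ = r * s := by rw [hr1s1, ← hrs]
    _ = s * r := by ring
  constructor
  · rw [hr₁, hs, Int.mul_ediv_cancel_left _ (by positivity : cden η (b + 1) ≠ 0),
      Int.mul_ediv_cancel_left _ (by positivity : cden ξ (a + 2) ≠ 0)]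
    exact hr1s
  · rw [hs₁, hr, Int.mul_ediv_cancel_left _ (by positivity : cden ξ (a + 1) ≠ 0),
      Int.mul_ediv_cancel_left _ (by positivity : cden η (b + 2) ≠ 0)]
    exact hs1r
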